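/- KKT necessity for strictly convex quadratic programs: Let H be a real symmetric positive definite n×n matrix, A a real m×n matrix, d ∈ ℝᵐ. Suppose x₀ ∈ ℝⁿ satisfies A x₀ ≤ d and (1/2) x₀ᵀ H x₀ ≤ (1/2) xᵀ H x for every x with A x ≤ d (i.e., x₀ minimizes (1/2) xᵀ H x over the polyhedron). Then there exists y ∈ ℝᵐ with y ≥ 0, H x₀ + Aᵀ y = 0, and yᵢ = 0 for every index i with (A x₀)ᵢ < dᵢ. -/

import Mathlib

open Matrix

private lemma sum_support_eq {m : ℕ} {E : Type*} [AddCommMonoid E] [Module ℝ E]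
    (r : Fin m → E) (t : Finset (Fin m)) (W : Fin m → ℝ) (h : ∀ i ∉ t, W i = 0) :
    ∑ i, W i • r i = ∑ i : t, W (i : Fin m) • r (i : Fin m) := by
  rw [Finset.sum_coe_sort t (fun i => W i • r i)]
  exact (Finset.sum_subset t.subset_univ (fun x _ hx => by rw [h x hx, zero_smul])).symm

private lemma cone_caratheodory {m : ℕ} {E : Type*} [AddCommGroup E] [Module ℝ E]
    (r : Fin m → E) :
    ∀ s : Finset (Fin m), ∀ y : Fin m → ℝ, 0 ≤ y → (∀ i ∉ s, y i = 0) →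
    ∃ t, t ⊆ s ∧ LinearIndependent ℝ (fun i : t => r (i : Fin m)) ∧
      ∃ y' : Fin m → ℝ, 0 ≤ y' ∧ (∀ i ∉ t, y' i = 0) ∧
        ∑ i, y' i • r i = ∑ i, y i • r i := by
  classical
  intro s
  induction s using Finset.strongInduction with
  | _ s ih =>
    intro y hy hsupp
    by_cases hli : LinearIndependent ℝ (fun i : s => r (i : Fin m))
    · exact ⟨s, Finset.Subset.refl s, hli, y, hy, hsupp, rfl⟩
    obtain ⟨g, hgsum, i₀, hgi₀⟩ := Fintype.not_linearIndependent_iff.1 hli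
    -- produce a relation with some positive coefficient
    set g' : s → ℝ := if 0 < g i₀ then g else -g with hg'
    have hg'sum : ∑ i : s, g' i • r (i : Fin m) = 0 := by
      rw [hg']; split
      · exact hgsum
      · simp only [Pi.neg_apply, neg_smul, Finset.sum_neg_distrib]
        rw [hgsum, neg_zero]
    have hg'pos : 0 < g' i₀ := by
      rw [hg']; split
      · assumption
      · rename_i hneg
        simp only [Pi.neg_apply]
        rcases lt_trichotomy (g i₀) 0 with h | h | h
        · linarith
        · exact absurd h hgi₀
        · exact absurd h hneg
    set G : Fin m → ℝ := fun i => if h : i ∈ s then g' ⟨i, h⟩ else 0 with hG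
    have hGoff : ∀ i ∉ s, G i = 0 := fun i hi => dif_neg hi
    have hGsum : ∑ i, G i • r i = 0 := by
      rw [sum_support_eq r s G hGoff, ← hg'sum]
      apply Finset.sum_congr rfl
      intro i _
      have : G (i : Fin m) = g' i := by
        rw [hG]; simp only [dif_pos i.2]
      rw [this]
    set P : Finset (Fin m) := s.filter (fun i => 0 < G i) with hP
    have hPne : P.Nonempty := by
      refine ⟨(i₀ : Fin m), ?_⟩
      rw [hP, Finset.mem_filter]
      refine ⟨i₀.2, ?_⟩
      have : G (i₀ : Fin m) = g' i₀ := by rw [hG]; simp only [dif_pos i₀.2]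
      rw [this]; exact hg'pos
    set τ : ℝ := P.inf' hPne (fun i => y i / G i) with hτ
    have hGposP : ∀ i ∈ P, 0 < G i := fun i hi => (Finset.mem_filter.1 hi).2
    have hτ0 : 0 ≤ τ := by
      rw [hτ]
      apply Finset.le_inf'
      intro i hi
      exact div_nonneg (hy i) (hGposP i hi).le
    obtain ⟨i₁, hi₁P, hi₁eq⟩ := Finset.exists_mem_eq_inf' hPne (fun i => y i / G i)
    have hi₁s : i₁ ∈ s := (Finset.mem_filter.1 hi₁P).1
    have hGi₁ : 0 < G i₁ := hGposP i₁ hi₁P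
    set y'' : Fin m → ℝ := fun i => y i - τ * G i with hy''def
    have hy'' : 0 ≤ y'' := by
      intro i
      rw [hy''def]
      simp only [Pi.zero_apply]
      by_cases hiP : i ∈ P
      · have hGi : 0 < G i := hGposP i hiP
        have : τ ≤ y i / G i := by rw [hτ]; exact Finset.inf'_le _ hiP
        have := (le_div_iff₀ hGi).1 this
        linarith
      · have hGle : G i ≤ 0 := by
          by_cases his : i ∈ s
          · by_contra hpos
            push_neg at hpos
            exact hiP (Finset.mem_filter.2 ⟨his, hpos⟩)
          · rw [hGoff i his]
        have h1 : τ * G i ≤ 0 := mul_nonpos_of_nonneg_of_nonpos hτ0 hGle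
        have h2 : (0:ℝ) ≤ y i := hy i
        linarith
    have hsupp'' : ∀ i ∉ s.erase i₁, y'' i = 0 := by
      intro i hi
      rw [Finset.mem_erase] at hi
      push_neg at hi
      by_cases hii : i = i₁
      · subst hii
        have hτval : τ = y i / G i := hτ.trans hi₁eq
        show y i - τ * G i = 0
        rw [hτval, div_mul_cancel₀ _ hGi₁.ne', sub_self]
      · have his : i ∉ s := hi hii
        show y i - τ * G i = 0
        rw [hsupp i his, hGoff i his, mul_zero, sub_self]
    have hsum'' : ∑ i, y'' i • r i = ∑ i, y i • r i := by
      simp only [hy''def, sub_smul, Finset.sum_sub_distrib, mul_smul]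
      rw [← Finset.smul_sum, hGsum, smul_zero, sub_zero]
    obtain ⟨t, hts, hli', y3, hy3, hsupp3, hsum3⟩ :=
      ih (s.erase i₁) (Finset.erase_ssubset hi₁s) y'' hy'' hsupp''
    exact ⟨t, hts.trans (Finset.erase_subset _ _), hli', y3, hy3, hsupp3,
      by rw [hsum3, hsum'']⟩

private lemma cone_isClosed {m n : ℕ} (r : Fin m → (Fin n → ℝ)) (s : Finset (Fin m)) :
    IsClosed {z : Fin n → ℝ |
      ∃ y : Fin m → ℝ, 0 ≤ y ∧ (∀ i ∉ s, y i = 0) ∧ ∑ i, y i • r i = z} := by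
  classical
  have hset : {z : Fin n → ℝ |
      ∃ y : Fin m → ℝ, 0 ≤ y ∧ (∀ i ∉ s, y i = 0) ∧ ∑ i, y i • r i = z}
      = ⋃ t ∈ {t : Finset (Fin m) | t ⊆ s ∧ LinearIndependent ℝ (fun i : t => r (i : Fin m))},
          (Fintype.linearCombination ℝ (fun i : t => r (i : Fin m))) '' {w : t → ℝ | 0 ≤ w} := by
    ext z
    simp only [Set.mem_setOf_eq, Set.mem_iUnion, Set.mem_image, exists_prop]
    constructor
    · rintro ⟨y, hy, hsupp, rfl⟩
      obtain ⟨t, hts, hli, y', hy', hsupp', hsum'⟩ := cone_caratheodory r s y hy hsupp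
      refine ⟨t, ⟨hts, hli⟩, fun i => y' i, fun i => hy' i, ?_⟩
      rw [Fintype.linearCombination_apply, ← hsum', sum_support_eq r t y' hsupp']
    · rintro ⟨t, ⟨hts, hli⟩, w, hw, rfl⟩
      refine ⟨fun i => if h : i ∈ t then w ⟨i, h⟩ else 0, ?_, ?_, ?_⟩
      · intro i
        simp only [Pi.zero_apply]
        by_cases h : i ∈ t
        · rw [dif_pos h]; exact hw ⟨i, h⟩
        · rw [dif_neg h]
      · intro i hi
        exact dif_neg (fun h => hi (hts h))
      · rw [sum_support_eq r t _ (fun i hi => dif_neg hi), Fintype.linearCombination_apply]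
        apply Finset.sum_congr rfl
        intro i _
        rw [dif_pos i.2]
  rw [hset]
  apply Set.Finite.isClosed_biUnion (Set.toFinite _)
  rintro t ⟨-, hli⟩
  have hker : LinearMap.ker (Fintype.linearCombination ℝ (fun i : t => r (i : Fin m))) = ⊥ := by
    rw [LinearMap.ker_eq_bot']
    intro w hw
    rw [Fintype.linearCombination_apply] at hw
    funext i
    exact Fintype.linearIndependent_iff.1 hli w hw i
  have horth : IsClosed {w : t → ℝ | 0 ≤ w} := by
    have hcl : IsClosed (⋂ i : t, (fun w : t → ℝ => w i) ⁻¹' Set.Ici 0) :=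
      isClosed_iInter fun i => isClosed_Ici.preimage (continuous_apply i)
    convert hcl using 1
    ext w
    simp [Pi.le_def, Set.mem_iInter]
  exact (LinearMap.isClosedEmbedding_of_injective hker).isClosedMap _ horth

/-- KKT necessity for strictly convex quadratic programs. -/
theorem qp_kkt_necessity {m n : ℕ}
    (H : Matrix (Fin n) (Fin n) ℝ)
    (hHsym : Hᵀ = H)
    (hHpd : ∀ v : Fin n → ℝ, v ≠ 0 → 0 < v ⬝ᵥ H.mulVec v)
    (A : Matrix (Fin m) (Fin n) ℝ) (d : Fin m → ℝ)
    (x₀ : Fin n → ℝ)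
    (hfeas : A.mulVec x₀ ≤ d)
    (hopt : ∀ x : Fin n → ℝ, A.mulVec x ≤ d →
      (1/2) * (x₀ ⬝ᵥ H.mulVec x₀) ≤ (1/2) * (x ⬝ᵥ H.mulVec x)) :
    ∃ y : Fin m → ℝ, 0 ≤ y ∧ H.mulVec x₀ + Aᵀ.mulVec y = 0 ∧
      ∀ i, A.mulVec x₀ i < d i → y i = 0 := by
  classical
  set c : Fin n → ℝ := H.mulVec x₀ with hc
  set s₀ : Finset (Fin m) := Finset.univ.filter (fun i => ¬ (A.mulVec x₀ i < d i)) with hs₀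
  have hmem_s₀ : ∀ i : Fin m, i ∉ s₀ ↔ A.mulVec x₀ i < d i := by
    intro i; simp [hs₀]
  set K₀ : Set (Fin n → ℝ) :=
    {z | ∃ y : Fin m → ℝ, 0 ≤ y ∧ (∀ i ∉ s₀, y i = 0) ∧ ∑ i, y i • A i = z} with hK₀
  have hsumAT : ∀ y : Fin m → ℝ, Aᵀ.mulVec y = ∑ i, y i • A i := by
    intro y
    funext j
    simp [Matrix.mulVec, dotProduct, Matrix.transpose_apply, Finset.sum_apply,
      mul_comm]
  suffices hK : (-c) ∈ K₀ by
    obtain ⟨y, hy, hsupp, hsum⟩ := hK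
    refine ⟨y, hy, ?_, fun i hi => hsupp i ((hmem_s₀ i).2 hi)⟩
    rw [hsumAT, hsum]
    simp
  by_contra hnot
  let e : EuclideanSpace ℝ (Fin n) ≃L[ℝ] (Fin n → ℝ) :=
    PiLp.continuousLinearEquiv 2 ℝ (fun _ : Fin n => ℝ)
  set K : ConvexCone ℝ (EuclideanSpace ℝ (Fin n)) :=
    { carrier := ⇑e ⁻¹' K₀
      smul_mem' := by
        rintro a ha z hz
        obtain ⟨y, hy, hsupp, hsum⟩ := hz
        refine ⟨a • y, fun i => mul_nonneg ha.le (hy i),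
          fun i hi => by simp [hsupp i hi], ?_⟩
        have hez : e (a • z) = a • e z := map_smul e a z
        show ∑ i, (a • y) i • A i = e (a • z)
        rw [hez, ← hsum, Finset.smul_sum]
        apply Finset.sum_congr rfl
        intro i _
        simp [mul_smul]
      add_mem' := by
        rintro z₁ hz₁ z₂ hz₂
        obtain ⟨y₁, hy₁, hsupp₁, hsum₁⟩ := hz₁
        obtain ⟨y₂, hy₂, hsupp₂, hsum₂⟩ := hz₂
        refine ⟨y₁ + y₂, fun i => add_nonneg (hy₁ i) (hy₂ i),
          fun i hi => by simp [hsupp₁ i hi, hsupp₂ i hi], ?_⟩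
        have hez : e (z₁ + z₂) = e z₁ + e z₂ := map_add e z₁ z₂
        show ∑ i, (y₁ + y₂) i • A i = e (z₁ + z₂)
        rw [hez, ← hsum₁, ← hsum₂, ← Finset.sum_add_distrib]
        apply Finset.sum_congr rfl
        intro i _
        simp [add_smul] } with hKdef
  have hmemK : ∀ z : EuclideanSpace ℝ (Fin n), z ∈ K ↔ e z ∈ K₀ := fun z => Iff.rfl
  have hne : ((K : Set (EuclideanSpace ℝ (Fin n)))).Nonempty := by
    refine ⟨0, ?_⟩
    show e 0 ∈ K₀
    rw [map_zero]
    exact ⟨0, le_refl 0, fun i _ => rfl, by simp⟩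
  have hclosed : IsClosed ((K : Set (EuclideanSpace ℝ (Fin n)))) :=
    (cone_isClosed (fun i => A i) s₀).preimage e.continuous
  have hbK : e.symm (-c) ∉ K := by
    intro hcon
    rw [hmemK, e.apply_symm_apply] at hcon
    exact hnot hcon
  have h0K : (0 : EuclideanSpace ℝ (Fin n)) ∈ K := by
    show e 0 ∈ K₀
    rw [map_zero]
    exact ⟨0, le_refl 0, fun i _ => rfl, by simp⟩
  let C : ProperCone ℝ (EuclideanSpace ℝ (Fin n)) :=
    { carrier := (K : Set (EuclideanSpace ℝ (Fin n)))
      add_mem' := fun ha hb => K.add_mem ha hb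
      zero_mem' := h0K
      smul_mem' := by
        intro a x hx
        rcases eq_or_lt_of_le a.2 with ha | ha
        · have ha0 : a = 0 := NNReal.coe_eq_zero.1 ha.symm
          subst ha0
          simpa using h0K
        · exact K.smul_mem (c := (a : ℝ)) ha hx
      isClosed' := hclosed }
  obtain ⟨v, hv1, hv2'⟩ := C.hyperplane_separation' (x₀ := e.symm (-c)) hbK
  have hv2 : inner ℝ v (e.symm (-c)) < 0 := by
    rw [real_inner_comm]; exact hv2'
  set v' : Fin n → ℝ := e v with hv'
  have hinner : ∀ x : EuclideanSpace ℝ (Fin n),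
      (inner ℝ x v : ℝ) = ∑ j, (e x) j * v' j := by
    intro x
    rw [PiLp.inner_apply]
    apply Finset.sum_congr rfl
    intro j _
    simp [RCLike.inner_apply, hv', e, PiLp.continuousLinearEquiv_apply, mul_comm]
  have hactive : ∀ i ∈ s₀, 0 ≤ ∑ j, A i j * v' j := by
    intro i hi
    have hmem : e.symm ((A i : Fin n → ℝ)) ∈ K := by
      rw [hmemK, e.apply_symm_apply]
      refine ⟨fun k => if k = i then 1 else 0, ?_, ?_, ?_⟩
      · intro k
        by_cases h : k = i <;> simp [h]
      · intro k hk
        have : k ≠ i := fun h => hk (h ▸ hi)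
        simp [this]
      · simp [ite_smul]
        exact (Finset.sum_eq_single i (fun b _ hb => if_neg hb)
          (fun h => absurd (Finset.mem_univ i) h)).trans (if_pos rfl)
    have h0 := hv1 _ hmem
    rw [hinner, e.apply_symm_apply] at h0
    exact h0
  have hcpos : 0 < ∑ j, c j * v' j := by
    have h2 : (inner ℝ (e.symm (-c)) v : ℝ) < 0 := by
      rw [real_inner_comm]; exact hv2
    rw [hinner, e.apply_symm_apply] at h2
    have : ∑ j, (-c) j * v' j = -∑ j, c j * v' j := by
      rw [← Finset.sum_neg_distrib]
      apply Finset.sum_congr rfl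
      intro j _
      simp
    rw [this] at h2
    linarith
  set w : Fin n → ℝ := -v' with hw
  have he₀ : c ⬝ᵥ w < 0 := by
    have : c ⬝ᵥ w = -∑ j, c j * v' j := by
      rw [hw, dotProduct, ← Finset.sum_neg_distrib]
      apply Finset.sum_congr rfl
      intro j _
      simp
    rw [this]
    linarith
  have hwne : w ≠ 0 := by
    intro h
    rw [h, dotProduct_zero] at he₀
    exact lt_irrefl 0 he₀
  have hq : 0 < w ⬝ᵥ H.mulVec w := hHpd w hwne
  have hAw_active : ∀ i ∈ s₀, A.mulVec w i ≤ 0 := by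
    intro i hi
    have : A.mulVec w i = -∑ j, A i j * v' j := by
      rw [hw, Matrix.mulVec, dotProduct, ← Finset.sum_neg_distrib]
      apply Finset.sum_congr rfl
      intro j _
      simp
    rw [this]
    linarith [hactive i hi]
  set e₀ : ℝ := c ⬝ᵥ w with he₀def
  set q : ℝ := w ⬝ᵥ H.mulVec w with hqdef
  set S : Finset (Fin m) := Finset.univ.filter (fun i => i ∉ s₀ ∧ 0 < A.mulVec w i) with hS
  set t : ℝ := min (-e₀ / q)
    (if hSne : S.Nonempty then
      S.inf' hSne (fun i => (d i - A.mulVec x₀ i) / (A.mulVec w i)) else 1) with ht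
  have htpos : 0 < t := by
    apply lt_min (div_pos (neg_pos.2 he₀) hq)
    split
    · rename_i hSne
      rw [Finset.lt_inf'_iff]
      intro i hi
      rw [hS, Finset.mem_filter] at hi
      exact div_pos (sub_pos.2 ((hmem_s₀ i).1 hi.2.1)) hi.2.2
    · exact one_pos
  have htq : t * q ≤ -e₀ := (le_div_iff₀ hq).1 (min_le_left _ _)
  have hxfeas : A.mulVec (x₀ + t • w) ≤ d := by
    intro i
    have hAx : A.mulVec (x₀ + t • w) i = A.mulVec x₀ i + t * A.mulVec w i := by
      rw [Matrix.mulVec_add, Matrix.mulVec_smul]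
      simp
    rw [hAx]
    by_cases hi : i ∈ s₀
    · have h1 := hAw_active i hi
      have h2 : A.mulVec x₀ i ≤ d i := hfeas i
      nlinarith
    · have hlt : A.mulVec x₀ i < d i := (hmem_s₀ i).1 hi
      by_cases hw0 : 0 < A.mulVec w i
      · have hiS : i ∈ S := by
          rw [hS, Finset.mem_filter]
          exact ⟨Finset.mem_univ _, hi, hw0⟩
        have hSne : S.Nonempty := ⟨i, hiS⟩
        have h3 : t ≤ (d i - A.mulVec x₀ i) / (A.mulVec w i) := by
          have hmr : t ≤ (if hSne : S.Nonempty then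
              S.inf' hSne (fun i => (d i - A.mulVec x₀ i) / (A.mulVec w i)) else 1) :=
            min_le_right _ _
          rw [dif_pos hSne] at hmr
          have h4 : S.inf' hSne (fun i => (d i - A.mulVec x₀ i) / (A.mulVec w i))
              ≤ (d i - A.mulVec x₀ i) / (A.mulVec w i) := Finset.inf'_le _ hiS
          exact hmr.trans h4
        have := (le_div_iff₀ hw0).1 h3
        linarith
      · push_neg at hw0
        nlinarith
  have hobj := hopt (x₀ + t • w) hxfeas
  have hcross : x₀ ⬝ᵥ H.mulVec w = e₀ := by
    rw [Matrix.dotProduct_mulVec]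
    have hvm : Matrix.vecMul x₀ H = H.mulVec x₀ := by
      conv_rhs => rw [← hHsym]
      exact (Matrix.mulVec_transpose H x₀).symm
    rw [hvm]
  have hcross2 : w ⬝ᵥ H.mulVec x₀ = e₀ := by
    rw [he₀def, hc, dotProduct_comm]
  have hexp : (x₀ + t • w) ⬝ᵥ H.mulVec (x₀ + t • w)
      = x₀ ⬝ᵥ H.mulVec x₀ + 2 * t * e₀ + t ^ 2 * q := by
    rw [Matrix.mulVec_add, Matrix.mulVec_smul, add_dotProduct,
      dotProduct_add, dotProduct_add, smul_dotProduct,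
      smul_dotProduct, dotProduct_smul, dotProduct_smul,
      hcross, hcross2, ← hqdef]
    simp only [smul_eq_mul]
    ring
  have hfinal : (0:ℝ) ≤ 2 * t * e₀ + t ^ 2 * q := by
    have h := hobj
    rw [hexp] at h
    have hx0 : x₀ ⬝ᵥ H.mulVec x₀ = x₀ ⬝ᵥ c := rfl
    linarith
  have hneg : 2 * t * e₀ + t ^ 2 * q < 0 := by
    have h1 : t * (t * q) ≤ t * (-e₀) := mul_le_mul_of_nonneg_left htq htpos.le
    have h2 : 0 < t * (-e₀) := mul_pos htpos (neg_pos.2 he₀)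
    nlinarith
  linarith
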